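/- Consider the case H = W, and let W × W act on End_A(R) by ((v,w)·h)(f) = v•(h(w⁻¹•f)). The map A → End_A(R) sending r ∈ A = R^W to the endomorphism f ↦ r·Av_W(f) (where Av_W(f) = (1/|W|)·∑_{w∈W} w•f) is injective, multiplicative, and its image is exactly the set End_A(R)^{W×W} of W × W-invariant endomorphisms; thus it is a ring isomorphism from A onto End_A(R)^{W×W} (whose unit element is the idempotent I ∘ Av_W). -/

import Mathlib

/-- for `H = W`, the map `A → End_A(R)`, `r ↦ (f ↦ r · Av_W(f))`, is an
injective multiplicative (and additive) map whose image is exactly the set of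
`W × W`-invariant endomorphisms; thus a ring isomorphism from `A` onto
`End_A(R)^{W×W}`, whose unit element is the idempotent `I ∘ Av_W`. -/
theorem fixedRing_iso_doubly_invariant_endomorphisms
    (k : Type*) [Field k] [CharZero k]
    (R : Type*) [CommRing R] [Algebra k R]
    (W : Type*) [Group W] [Fintype W] [MulSemiringAction W R] [SMulCommClass W k R]
    -- A = R^W, the invariant subalgebra
    (A : Subalgebra k R) (hA : ∀ r : R, r ∈ A ↔ ∀ w : W, w • r = r)
    -- Av_W : R → R is the averaging map (composed with the inclusion), an A-module map
    (AvW : Module.End A R)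
    (hAvW : ∀ r : R, AvW r = (Fintype.card W : k)⁻¹ • ∑ w : W, w • r)
    -- Φ : A → End_A(R), r ↦ (f ↦ r · Av_W(f))
    (Φ : A → Module.End A R)
    (hΦ : ∀ (r : A) (f : R), Φ r f = (r : R) * AvW f) :
    Function.Injective Φ ∧
    (∀ a b : A, Φ (a * b) = Φ a * Φ b) ∧
    (∀ a b : A, Φ (a + b) = Φ a + Φ b) ∧
    Set.range Φ =
      {h : Module.End A R | ∀ (v w : W) (f : R), v • h (w⁻¹ • f) = h f} ∧
    (Φ 1 = AvW ∧ AvW * AvW = AvW) ∧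
    (∀ h ∈ Set.range Φ, Φ 1 * h = h ∧ h * Φ 1 = h) := by
  have hcard : (Fintype.card W : k) ≠ 0 := by
    exact_mod_cast Fintype.card_ne_zero
  have hsmulA : ∀ (a : A) (f : R), a • f = (a : R) * f := fun a f => rfl
  -- invariance of AvW f
  have hinv : ∀ (w : W) (f : R), w • AvW f = AvW f := by
    intro w f
    rw [hAvW, smul_comm]
    congr 1
    rw [Finset.smul_sum]
    exact Fintype.sum_equiv (Equiv.mulLeft w) _ _ (fun v => (mul_smul w v f).symm)
  -- AvW fixes invariant elements
  have hfix : ∀ r : R, (∀ w : W, w • r = r) → AvW r = r := by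
    intro r hr
    rw [hAvW]
    simp only [hr, Finset.sum_const, Finset.card_univ, ← Nat.cast_smul_eq_nsmul k, smul_smul,
      inv_mul_cancel₀ hcard, one_smul]
  have hmem : ∀ f : R, AvW f ∈ A := fun f => (hA _).2 (fun w => hinv w f)
  have hidem : ∀ f : R, AvW (AvW f) = AvW f := fun f => hfix _ (fun w => hinv w f)
  -- AvW (w • f) = AvW f
  have hshift : ∀ (w : W) (f : R), AvW (w • f) = AvW f := by
    intro w f
    rw [hAvW, hAvW]
    congr 1
    exact Fintype.sum_equiv (Equiv.mulRight w) _ _ (fun v => (mul_smul v w f).symm)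
  -- A-linearity instances
  have hmul : ∀ (a : A) (f : R), AvW ((a : R) * f) = (a : R) * AvW f := by
    intro a f
    have := AvW.map_smul a f
    rwa [hsmulA, hsmulA] at this
  -- k-linearity of any h : Module.End A R
  have hk : ∀ (h : Module.End A R) (c : k) (f : R), h (c • f) = c • h f := by
    intro h c f
    have h1 : (algebraMap k A c) • f = c • f := by
      rw [hsmulA, Algebra.smul_def]; rfl
    have h2 : (algebraMap k A c) • h f = c • h f := by
      rw [hsmulA, Algebra.smul_def]; rfl
    rw [← h1, h.map_smul, h2]
  -- injectivity
  have hinj : Function.Injective Φ := by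
    intro a b hab
    have ha := hΦ a 1
    have hb := hΦ b 1
    have hone : AvW 1 = 1 := hfix 1 (fun w => smul_one w)
    rw [hab] at ha
    rw [hb, hone, mul_one, mul_one] at ha
    exact Subtype.ext ha.symm
  refine ⟨hinj, ?_, ?_, ?_, ?_, ?_⟩
  · intro a b
    ext f
    show Φ (a * b) f = Φ a (Φ b f)
    rw [hΦ, hΦ, hΦ, hmul, hidem]
    push_cast
    ring
  · intro a b
    ext f
    show Φ (a + b) f = Φ a f + Φ b f
    rw [hΦ, hΦ, hΦ]
    push_cast
    ring
  · ext h
    constructor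
    · rintro ⟨r, rfl⟩ v w f
      rw [hΦ, hΦ, smul_mul', (hA _).1 r.2, hshift, hinv]
    · intro hh
      have h1A : h 1 ∈ A := by
        refine (hA _).2 (fun w => ?_)
        have := hh w 1 1
        simpa using this
      refine ⟨⟨h 1, h1A⟩, ?_⟩
      ext f
      rw [hΦ]
      -- h f = h (AvW f)
      have hWinv : ∀ (w : W) (f : R), h (w • f) = h f := by
        intro w f
        have := hh 1 w (w • f)
        simpa [inv_smul_smul] using this.symm
      have havg : h (AvW f) = h f := by
        rw [hAvW, hk, map_sum]
        simp only [hWinv, Finset.sum_const, Finset.card_univ, ← Nat.cast_smul_eq_nsmul k, smul_smul,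
          inv_mul_cancel₀ hcard, one_smul]
      have : h f = h ((⟨AvW f, hmem f⟩ : A) • (1 : R)) := by
        rw [hsmulA, mul_one, havg]
      rw [this, h.map_smul, hsmulA]
      exact mul_comm _ _
  · constructor
    · ext f
      rw [hΦ]; push_cast; rw [one_mul]
    · ext f
      exact hidem f
  · rintro h ⟨r, rfl⟩
    constructor <;> ext f
    · show Φ 1 (Φ r f) = Φ r f
      rw [hΦ, hΦ]
      push_cast
      rw [one_mul, hmul, hidem]
    · show Φ r (Φ 1 f) = Φ r f
      rw [hΦ, hΦ]
      push_cast
      rw [one_mul, hidem, hΦ]
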